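/- arXiv:1405.2570 — 2 statements merged into one kernel-verified Lean document; each statement's English description precedes it below -/
import Mathlib

section
/- Under Assumption A2 with constants τ_{ij} > 0 (i,j ∈ {1,2}) and the H\u00fcsler–Reiss condition (1−ρ₀(n))·ln n → λ², if λ² ≥ −τ̃ where τ̃ = τ₁₂ − (τ₁₁+τ₂₂)/2, then with τ_{ii}(n) = τ_{ii}/ln n and ρ̃₀(n) = (ρ₀(n) − τ₁₂(n))/√((1−τ₁₁(n))(1−τ₂₂(n))) and b_n = √(2 ln n) − ln(4π ln n)/(2√(2 ln n)), one has lim_{n→∞} b_n²·(1−ρ̃₀(n))/(1+ρ̃₀(n)) = λ² + τ̃. -/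
open Real Filter

noncomputable def bseq (n : ℕ) : ℝ :=
  Real.sqrt (2 * Real.log n) -
    Real.log (4 * Real.pi * Real.log n) / (2 * Real.sqrt (2 * Real.log n))

lemma aux_div_mul (b L x y : ℝ) (hL : L ≠ 0) :
    b / L * (L * x / y) = b * x / y := by
  rw [div_mul_div_comm, show b * (L * x) = L * (b * x) from by ring,
    show L * y = L * y from rfl, mul_div_mul_left _ _ hL]

set_option maxHeartbeats 1000000 in
theorem stmt_8 (ρ₀ : ℕ → ℝ) (hρ : ∀ n, -1 < ρ₀ n ∧ ρ₀ n < 1)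
    (lsq τ₁₁ τ₂₂ τ₁₂ : ℝ) (hlsq : 0 ≤ lsq)
    (hτ₁₁ : 0 < τ₁₁) (hτ₂₂ : 0 < τ₂₂) (hτ₁₂ : 0 < τ₁₂)
    (hτle : τ₁₂ ≤ Real.sqrt (τ₁₁ * τ₂₂))
    (hHR : Tendsto (fun n : ℕ => (1 - ρ₀ n) * Real.log n) atTop (nhds lsq))
    (hge : lsq ≥ -(τ₁₂ - (τ₁₁ + τ₂₂) / 2)) :
    Tendsto (fun n : ℕ =>
        (bseq n) ^ 2 *
          (1 - (ρ₀ n - τ₁₂ / Real.log n) /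
              Real.sqrt ((1 - τ₁₁ / Real.log n) * (1 - τ₂₂ / Real.log n))) /
          (1 + (ρ₀ n - τ₁₂ / Real.log n) /
              Real.sqrt ((1 - τ₁₁ / Real.log n) * (1 - τ₂₂ / Real.log n))))
      atTop (nhds (lsq + (τ₁₂ - (τ₁₁ + τ₂₂) / 2))) := by
  -- notation
  have hLtop : Tendsto (fun n : ℕ => Real.log n) atTop atTop :=
    Real.tendsto_log_atTop.comp tendsto_natCast_atTop_atTop
  have hinv : ∀ c : ℝ, Tendsto (fun n : ℕ => c / Real.log n) atTop (nhds 0) :=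
    fun c => Tendsto.div_atTop tendsto_const_nhds hLtop
  -- eventual positivity facts
  have hev : ∀ᶠ n : ℕ in atTop,
      1 < Real.log n ∧ τ₁₁ < Real.log n ∧ τ₂₂ < Real.log n := by
    filter_upwards [hLtop.eventually_gt_atTop 1, hLtop.eventually_gt_atTop τ₁₁,
      hLtop.eventually_gt_atTop τ₂₂] with n h1 h2 h3
    exact ⟨h1, h2, h3⟩
  -- P → 1 and √P → 1
  have hP1 : Tendsto (fun n : ℕ => (1 - τ₁₁ / Real.log n) * (1 - τ₂₂ / Real.log n))
      atTop (nhds 1) := by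
    have c1 : Tendsto (fun _ : ℕ => (1:ℝ)) atTop (nhds 1) := tendsto_const_nhds
    have h := (c1.sub (hinv τ₁₁)).mul (c1.sub (hinv τ₂₂))
    simpa using h
  have hsP : Tendsto (fun n : ℕ =>
      Real.sqrt ((1 - τ₁₁ / Real.log n) * (1 - τ₂₂ / Real.log n))) atTop (nhds 1) := by
    have h := (Real.continuous_sqrt.tendsto 1).comp hP1
    rw [Real.sqrt_one] at h
    exact h
  -- ρ₀ → 1
  have hρ1 : Tendsto ρ₀ atTop (nhds 1) := by
    have h0 : Tendsto (fun n : ℕ => (1 - ρ₀ n) * Real.log n / Real.log n) atTop (nhds 0) :=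
      hHR.div_atTop hLtop
    have h1 : Tendsto (fun n : ℕ => 1 - (1 - ρ₀ n) * Real.log n / Real.log n)
        atTop (nhds 1) := by
      simpa using tendsto_const_nhds.sub h0
    refine h1.congr' ?_
    filter_upwards [hev] with n hn
    have hL0 : Real.log n ≠ 0 := by linarith [hn.1]
    field_simp
    ring
  -- ρ̃ → 1
  have hrt : Tendsto (fun n : ℕ => (ρ₀ n - τ₁₂ / Real.log n) /
      Real.sqrt ((1 - τ₁₁ / Real.log n) * (1 - τ₂₂ / Real.log n))) atTop (nhds 1) := by
    have h := (hρ1.sub (hinv τ₁₂)).div hsP one_ne_zero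
    simp only [sub_zero, div_one] at h
    exact h
  -- log L / L → 0 hence log(4πL)/L → 0
  have hc : Tendsto (fun n : ℕ =>
      Real.log (4 * Real.pi * Real.log n) / Real.log n) atTop (nhds 0) := by
    have hll : Tendsto (fun x : ℝ => Real.log x / x) atTop (nhds 0) :=
      Real.isLittleO_log_id_atTop.tendsto_div_nhds_zero
    have hll' : Tendsto (fun n : ℕ => Real.log (Real.log n) / Real.log n) atTop (nhds 0) :=
      hll.comp hLtop
    have h := (hinv (Real.log (4 * Real.pi))).add hll'
    rw [add_zero] at h
    refine h.congr' ?_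
    filter_upwards [hev] with n hn
    have hL0 : (0:ℝ) < Real.log n := by linarith [hn.1]
    rw [Real.log_mul (by positivity) (ne_of_gt hL0), add_div]
  -- bseq² / L → 2
  have hbL : Tendsto (fun n : ℕ => (bseq n) ^ 2 / Real.log n) atTop (nhds 2) := by
    have c2 : Tendsto (fun _ : ℕ => (2:ℝ)) atTop (nhds 2) := tendsto_const_nhds
    have h := (c2.sub hc).add ((hc.pow 2).div_const 8)
    have h2 : Tendsto (fun n : ℕ =>
        2 - Real.log (4 * Real.pi * Real.log n) / Real.log n +
          (Real.log (4 * Real.pi * Real.log n) / Real.log n) ^ 2 / 8)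
        atTop (nhds 2) := by simpa using h
    refine h2.congr' ?_
    filter_upwards [hev] with n hn
    have hL0 : (0:ℝ) < Real.log n := by linarith [hn.1]
    set c := Real.log (4 * Real.pi * Real.log n) with hcdef
    set t := Real.sqrt (2 * Real.log n) with htdef
    have ht0 : (0:ℝ) < t := Real.sqrt_pos.mpr (by linarith)
    have ht2 : t * t = 2 * Real.log n := Real.mul_self_sqrt (by linarith)
    have ht2' : t ^ 2 = 2 * Real.log n := by rw [sq]; exact ht2
    have hb : bseq n = t - c / (2 * t) := rfl
    have e1 : (t - c / (2 * t)) ^ 2 = t ^ 2 - c + c ^ 2 / (4 * t ^ 2) := by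
      field_simp
      ring
    rw [hb, e1, ht2']
    field_simp
    ring
  -- key limit : L * (1 - ρ̃) → S
  have hN : Tendsto (fun n : ℕ =>
      ((τ₁₁ * τ₂₂ / Real.log n - (τ₁₁ + τ₂₂)) /
          (Real.sqrt ((1 - τ₁₁ / Real.log n) * (1 - τ₂₂ / Real.log n)) + 1) +
        (1 - ρ₀ n) * Real.log n + τ₁₂) /
      Real.sqrt ((1 - τ₁₁ / Real.log n) * (1 - τ₂₂ / Real.log n)))
      atTop (nhds (lsq + (τ₁₂ - (τ₁₁ + τ₂₂) / 2))) := by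
    have hnum : Tendsto (fun n : ℕ =>
        (τ₁₁ * τ₂₂ / Real.log n - (τ₁₁ + τ₂₂)) /
          (Real.sqrt ((1 - τ₁₁ / Real.log n) * (1 - τ₂₂ / Real.log n)) + 1) +
          (1 - ρ₀ n) * Real.log n + τ₁₂) atTop
        (nhds ((0 - (τ₁₁ + τ₂₂)) / (1 + 1) + lsq + τ₁₂)) := by
      exact (((((hinv (τ₁₁ * τ₂₂)).sub tendsto_const_nhds).div
        (hsP.add tendsto_const_nhds) (by norm_num)).add hHR).add tendsto_const_nhds)
    have h := hnum.div hsP one_ne_zero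
    have : (0 - (τ₁₁ + τ₂₂)) / (1 + 1) + lsq + τ₁₂ =
        (lsq + (τ₁₂ - (τ₁₁ + τ₂₂) / 2)) * 1 := by ring
    rw [this] at h
    simp only [mul_one, div_one] at h
    exact h
  have hL1 : Tendsto (fun n : ℕ =>
      Real.log n * (1 - (ρ₀ n - τ₁₂ / Real.log n) /
        Real.sqrt ((1 - τ₁₁ / Real.log n) * (1 - τ₂₂ / Real.log n))))
      atTop (nhds (lsq + (τ₁₂ - (τ₁₁ + τ₂₂) / 2))) := by
    refine hN.congr' ?_
    filter_upwards [hev] with n hn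
    obtain ⟨h1, h2, h3⟩ := hn
    have hL0 : (0:ℝ) < Real.log n := by linarith
    set L := Real.log n with hLdef
    have hP0 : (0:ℝ) < (1 - τ₁₁ / L) * (1 - τ₂₂ / L) := by
      have e1 : (0:ℝ) < 1 - τ₁₁ / L := by
        rw [sub_pos, div_lt_one hL0]; exact h2
      have e2 : (0:ℝ) < 1 - τ₂₂ / L := by
        rw [sub_pos, div_lt_one hL0]; exact h3
      exact mul_pos e1 e2
    set s := Real.sqrt ((1 - τ₁₁ / L) * (1 - τ₂₂ / L)) with hsdef
    have hs0 : (0:ℝ) < s := Real.sqrt_pos.mpr hP0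
    have hss : s * s = (1 - τ₁₁ / L) * (1 - τ₂₂ / L) := Real.mul_self_sqrt hP0.le
    have hkey : L * s - L = (τ₁₁ * τ₂₂ / L - (τ₁₁ + τ₂₂)) / (s + 1) := by
      rw [eq_div_iff (by positivity)]
      have : (L * s - L) * (s + 1) = L * (s * s) - L := by ring
      rw [this, hss]
      field_simp
      ring
    have hL0' : L ≠ 0 := ne_of_gt hL0
    have hs0' : s ≠ 0 := ne_of_gt hs0
    rw [← hkey]
    field_simp
    ring
  -- assemble
  have hden : Tendsto (fun n : ℕ => 1 + (ρ₀ n - τ₁₂ / Real.log n) /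
      Real.sqrt ((1 - τ₁₁ / Real.log n) * (1 - τ₂₂ / Real.log n))) atTop (nhds (1 + 1)) :=
    (tendsto_const_nhds : Tendsto (fun _ : ℕ => (1:ℝ)) atTop (nhds 1)).add hrt
  have hfin := hbL.mul (hL1.div hden (by norm_num : (1:ℝ) + 1 ≠ 0))
  have hval : (2:ℝ) * ((lsq + (τ₁₂ - (τ₁₁ + τ₂₂) / 2)) / (1 + 1)) =
      lsq + (τ₁₂ - (τ₁₁ + τ₂₂) / 2) := by ring
  rw [hval] at hfin
  refine hfin.congr' ?_
  filter_upwards [hev] with n hn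
  have hL0 : Real.log n ≠ 0 := by
    have : (1:ℝ) < Real.log n := hn.1
    linarith
  simp only [Pi.div_apply]
  exact aux_div_mul _ _ _ _ hL0
end

section
/- Let η_k, k ≥ 1, be bounded random variables with |η_k| ≤ 1 and suppose Var(∑_{k=1}^n (1/k)·η_k) ≤ c·(ln n)²·(ln ln n)^{−(1+ε)} for some c > 0 and ε > 0. If additionally E[η_k] = p for all k, then (1/ln n)·∑_{k=1}^n (1/k)·η_k → p almost surely as n → ∞. -/
open Real Filter MeasureTheory ProbabilityTheory

noncomputable def aux19N (γ : ℝ) (j : ℕ) : ℕ := ⌈Real.exp (Real.exp ((j : ℝ) ^ γ))⌉₊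

lemma aux19N_cast_ge (γ : ℝ) (j : ℕ) :
    Real.exp (Real.exp ((j : ℝ) ^ γ)) ≤ (aux19N γ j : ℝ) := Nat.le_ceil _

lemma aux19N_pos (γ : ℝ) (j : ℕ) : 0 < aux19N γ j :=
  Nat.ceil_pos.mpr (Real.exp_pos _)

lemma aux19N_log_ge (γ : ℝ) (j : ℕ) :
    Real.exp ((j : ℝ) ^ γ) ≤ Real.log (aux19N γ j) := by
  have h := aux19N_cast_ge γ j
  calc Real.exp ((j:ℝ)^γ) = Real.log (Real.exp (Real.exp ((j:ℝ)^γ))) := (Real.log_exp _).symm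
  _ ≤ _ := Real.log_le_log (Real.exp_pos _) h

lemma aux19N_log_le (γ : ℝ) (j : ℕ) :
    Real.log (aux19N γ j) ≤ Real.exp ((j : ℝ) ^ γ) + 1 := by
  have h1 : (aux19N γ j : ℝ) ≤ Real.exp (Real.exp ((j:ℝ)^γ)) + 1 :=
    (Nat.ceil_lt_add_one (Real.exp_pos _).le).le
  have h2 : Real.exp (Real.exp ((j:ℝ)^γ)) + 1 ≤ Real.exp (Real.exp ((j:ℝ)^γ) + 1) := by
    rw [Real.exp_add]
    nlinarith [Real.exp_one_gt_d9, Real.exp_pos (Real.exp ((j:ℝ)^γ)),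
      Real.one_le_exp (Real.exp_pos ((j:ℝ)^γ)).le]
  have hpos : (0:ℝ) < (aux19N γ j : ℝ) := by exact_mod_cast aux19N_pos γ j
  calc Real.log _ ≤ Real.log (Real.exp (Real.exp ((j:ℝ)^γ) + 1)) :=
        Real.log_le_log hpos (h1.trans h2)
  _ = _ := Real.log_exp _

lemma aux19N_three (γ : ℝ) (j : ℕ) : 3 ≤ aux19N γ j := by
  have h1 : (0:ℝ) ≤ (j:ℝ) ^ γ := Real.rpow_nonneg (Nat.cast_nonneg j) γ
  have h2 : Real.exp 1 ≤ Real.exp ((j:ℝ)^γ + 1) := Real.exp_le_exp.mpr (by linarith)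
  have h3 : (2:ℝ) < Real.exp (Real.exp ((j:ℝ)^γ)) := by
    calc (2:ℝ) < Real.exp 1 := lt_trans (by norm_num) Real.exp_one_gt_d9
    _ ≤ Real.exp (Real.exp ((j:ℝ)^γ)) := Real.exp_le_exp.mpr (Real.one_le_exp h1)
  have := h3.trans_le (aux19N_cast_ge γ j)
  have h4 : (2:ℕ) < aux19N γ j := by exact_mod_cast this
  omega

lemma aux19N_mono {γ : ℝ} (hγ : 0 ≤ γ) : Monotone (aux19N γ) := by
  intro a b hab
  apply Nat.ceil_mono
  apply Real.exp_le_exp.mpr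
  apply Real.exp_le_exp.mpr
  exact Real.rpow_le_rpow (Nat.cast_nonneg a) (Nat.cast_le.mpr hab) hγ

lemma aux19_rpow_succ {x γ : ℝ} (hx : 1 ≤ x) (hγ0 : 0 ≤ γ) (hγ1 : γ ≤ 1) :
    (x + 1) ^ γ ≤ x ^ γ + x ^ (γ - 1) := by
  have hx0 : (0:ℝ) < x := lt_of_lt_of_le one_pos hx
  have h1 : x + 1 = x * (1 + 1/x) := by field_simp
  have h2 : (x + 1) ^ γ = x ^ γ * (1 + 1/x) ^ γ := by
    rw [h1, Real.mul_rpow hx0.le (by positivity)]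
  have h3 : (1 + 1/x) ^ γ ≤ 1 + 1/x := by
    calc (1 + 1/x) ^ γ ≤ (1 + 1/x) ^ (1:ℝ) :=
          Real.rpow_le_rpow_of_exponent_le (le_add_of_nonneg_right (by positivity)) hγ1
    _ = 1 + 1/x := Real.rpow_one _
  have h4 : x ^ (γ - 1) = x ^ γ / x := by
    rw [Real.rpow_sub hx0, Real.rpow_one]
  have h5 : (0:ℝ) ≤ x ^ γ := Real.rpow_nonneg hx0.le γ
  calc (x+1)^γ = x^γ * (1 + 1/x)^γ := h2
  _ ≤ x^γ * (1 + 1/x) := mul_le_mul_of_nonneg_left h3 h5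
  _ = x ^ γ + x ^ (γ - 1) := by rw [h4]; field_simp
open Real Filter MeasureTheory Topology

lemma aux19_pathwise (t H : ℕ → ℝ) (M : ℕ → ℕ)
    (hH : Monotone H) (hM1 : ∀ j, 1 ≤ M j)
    (hMmono : Monotone M) (hMtop : Tendsto M atTop atTop)
    (hincr : ∀ m n : ℕ, m ≤ n → |t n - t m| ≤ 2 * (H n - H m))
    (hsub : ∀ δ : ℝ, 0 < δ → ∀ᶠ j in atTop, |t (M j)| ≤ δ * Real.log (M j))
    (hgap : ∀ δ : ℝ, 0 < δ → ∀ᶠ j in atTop,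
      2 * (H (M (j+1)) - H (M j)) ≤ δ * Real.log (M j)) :
    Tendsto (fun n => t n / Real.log n) atTop (𝓝 0) := by
  rw [Metric.tendsto_atTop]
  intro δ hδ
  have hδ3 : 0 < δ/3 := by linarith
  obtain ⟨j₀, hj₀⟩ := (((hsub (δ/3) hδ3).and (hgap (δ/3) hδ3)).and
    (eventually_atTop.mpr ⟨1, fun j hj => hj⟩)).exists_forall_of_atTop
  refine ⟨max (M j₀) 3, fun n hn => ?_⟩
  have hn3 : 3 ≤ n := le_trans (le_max_right _ _) hn
  have hnM : M j₀ ≤ n := le_trans (le_max_left _ _) hn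
  have hlogn : 1 ≤ Real.log n := by
    have h3 : Real.exp 1 ≤ (n:ℝ) := by
      have : Real.exp 1 < 3 := lt_trans Real.exp_one_lt_d9 (by norm_num)
      have h3n : (3:ℝ) ≤ (n:ℝ) := by exact_mod_cast hn3
      linarith
    calc (1:ℝ) = Real.log (Real.exp 1) := (Real.log_exp 1).symm
    _ ≤ Real.log n := Real.log_le_log (Real.exp_pos 1) h3
  have hlogn0 : 0 < Real.log n := lt_of_lt_of_le one_pos hlogn
  -- find j with M j ≤ n < M (j+1) and j₀ ≤ j
  have hex : ∃ k, n < M k := (hMtop.eventually (eventually_gt_atTop n)).exists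
  have hkgt : j₀ < Nat.find hex := by
    rw [Nat.lt_find_iff]
    intro i hi
    exact not_lt.mpr (le_trans (hMmono hi) hnM)
  set j := Nat.find hex - 1 with hj
  have hkeq : Nat.find hex = j + 1 := by omega
  have hMjn : M j ≤ n := by
    have := Nat.find_min hex (m := j) (by omega)
    omega
  have hnMj1 : n < M (j + 1) := by
    rw [← hkeq]; exact Nat.find_spec hex
  have hjj₀ : j₀ ≤ j := by omega
  obtain ⟨⟨hA, hB⟩, hj1⟩ := hj₀ j hjj₀
  have hlogMj : Real.log (M j) ≤ Real.log n := by
    apply Real.log_le_log (by exact_mod_cast hM1 j)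
    exact_mod_cast hMjn
  have hlogMj0 : 0 ≤ Real.log (M j) := Real.log_natCast_nonneg _
  have htn : |t n| ≤ δ/3 * Real.log (M j) + 2 * (H n - H (M j)) := by
    have h1 := hincr (M j) n hMjn
    calc |t n| = |t (M j) + (t n - t (M j))| := by ring_nf
    _ ≤ |t (M j)| + |t n - t (M j)| := abs_add_le _ _
    _ ≤ δ/3 * Real.log (M j) + 2 * (H n - H (M j)) := add_le_add hA h1
  have hHn : H n ≤ H (M (j+1)) := hH hnMj1.le
  have : |t n| ≤ δ/3 * Real.log n + δ/3 * Real.log n := by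
    calc |t n| ≤ δ/3 * Real.log (M j) + 2 * (H (M (j+1)) - H (M j)) := by
          refine htn.trans (add_le_add (le_refl _) ?_); linarith
    _ ≤ δ/3 * Real.log (M j) + δ/3 * Real.log (M j) := add_le_add (le_refl _) hB
    _ ≤ δ/3 * Real.log n + δ/3 * Real.log n := by
          have := mul_le_mul_of_nonneg_left hlogMj hδ3.le; linarith
  rw [Real.dist_eq, sub_zero, abs_div, abs_of_pos hlogn0, div_lt_iff₀ hlogn0]
  calc |t n| ≤ δ/3 * Real.log n + δ/3 * Real.log n := this
  _ < δ * Real.log n := by nlinarith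
open Real Filter MeasureTheory ProbabilityTheory Topology

lemma aux19_one_le_log {n : ℕ} (hn : 3 ≤ n) : 1 ≤ Real.log n := by
  have h3 : Real.exp 1 ≤ (n:ℝ) := by
    have h1 : Real.exp 1 < 3 := lt_trans Real.exp_one_lt_d9 (by norm_num)
    have h2 : (3:ℝ) ≤ (n:ℝ) := by exact_mod_cast hn
    linarith
  calc (1:ℝ) = Real.log (Real.exp 1) := (Real.log_exp 1).symm
  _ ≤ Real.log n := Real.log_le_log (Real.exp_pos 1) h3

theorem stmt_19 {Ω : Type*} [MeasureSpace Ω] [IsProbabilityMeasure (ℙ : Measure Ω)]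
    (η : ℕ → Ω → ℝ) (hmeas : ∀ k, Measurable (η k))
    (hbdd : ∀ k ω, |η k ω| ≤ 1)
    (c ε p : ℝ) (hc : 0 < c) (hε : 0 < ε)
    (hvar : ∀ n : ℕ, 3 ≤ n →
      variance (fun ω => ∑ k ∈ Finset.Icc 1 n, (1 / (k : ℝ)) * η k ω) ℙ ≤
        c * (Real.log n) ^ 2 * (Real.log (Real.log n)) ^ (-(1 + ε)))
    (hmean : ∀ k : ℕ, 1 ≤ k → ∫ ω, η k ω = p) :
    ∀ᵐ ω, Tendsto (fun n : ℕ =>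
        (1 / Real.log n) * ∑ k ∈ Finset.Icc 1 n, (1 / (k : ℝ)) * η k ω)
      atTop (nhds p) := by
  have hε1 : (0:ℝ) < 1 + ε := by linarith
  set γ : ℝ := (1 + ε/2) / (1 + ε) with hγdef
  have hγ0 : 0 < γ := by positivity
  have hγ1 : γ < 1 := by rw [hγdef, div_lt_one hε1]; linarith
  have hγε : γ * -(1 + ε) = -(1 + ε/2) := by
    rw [hγdef]; field_simp
  set M : ℕ → ℕ := fun j => aux19N γ (j + 1) with hMdef
  set S : ℕ → Ω → ℝ := fun n ω => ∑ k ∈ Finset.Icc 1 n, (1 / (k : ℝ)) * η k ω with hSdef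
  set H : ℕ → ℝ := fun n => ∑ k ∈ Finset.Icc 1 n, (1 / (k : ℝ)) with hHdef
  -- harmonic facts
  have hHharm : ∀ n : ℕ, H n = ((harmonic n : ℚ) : ℝ) := by
    intro n
    rw [hHdef, harmonic_eq_sum_Icc]
    push_cast
    simp [one_div]
  have hHlog : ∀ n : ℕ, Real.log n ≤ H n := by
    intro n
    rcases Nat.eq_zero_or_pos n with h | h
    · simp [h, hHharm 0]
    · have h1 : Real.log n ≤ Real.log ((n:ℝ) + 1) :=
        Real.log_le_log (by exact_mod_cast h) (by linarith)
      have h2 := log_add_one_le_harmonic n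
      rw [hHharm]
      push_cast at h2 ⊢
      linarith
  have hHub : ∀ n : ℕ, H n ≤ 1 + Real.log n := by
    intro n
    rw [hHharm]
    exact_mod_cast harmonic_le_one_add_log n
  have hHmono : Monotone H := by
    intro a b hab
    apply Finset.sum_le_sum_of_subset_of_nonneg (Finset.Icc_subset_Icc_right hab)
    intros k _ _
    positivity
  -- M facts
  have hM3 : ∀ j, 3 ≤ M j := fun j => aux19N_three γ _
  have hM1 : ∀ j, 1 ≤ M j := fun j => le_trans (by norm_num) (hM3 j)
  have hMmono : Monotone M := fun a b h => aux19N_mono hγ0.le (by omega)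
  have hMlog_ge : ∀ j : ℕ, Real.exp (((j:ℝ) + 1) ^ γ) ≤ Real.log (M j) := by
    intro j
    have := aux19N_log_ge γ (j + 1)
    push_cast at this
    exact this
  have hMlog_le : ∀ j : ℕ, Real.log (M j) ≤ Real.exp (((j:ℝ) + 1) ^ γ) + 1 := by
    intro j
    have := aux19N_log_le γ (j + 1)
    push_cast at this
    exact this
  have hMlogpos : ∀ j : ℕ, 0 < Real.log (M j) :=
    fun j => lt_of_lt_of_le (Real.exp_pos _) (hMlog_ge j)
  have hMtop : Tendsto M atTop atTop := by
    have h1 : Tendsto (fun j : ℕ => Real.exp (Real.exp ((((j+1) : ℕ):ℝ) ^ γ))) atTop atTop := by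
      apply Real.tendsto_exp_atTop.comp
      apply Real.tendsto_exp_atTop.comp
      apply (tendsto_rpow_atTop hγ0).comp
      exact tendsto_natCast_atTop_atTop.comp (tendsto_add_atTop_nat 1)
    exact tendsto_nat_ceil_atTop.comp h1
  -- measurability / integrability
  have hmeasS : ∀ n, Measurable (S n) := fun n =>
    Finset.measurable_sum _ (fun k _ => (hmeas k).const_mul _)
  have hSbd : ∀ n ω, |S n ω| ≤ H n := by
    intro n ω
    calc |S n ω| ≤ ∑ k ∈ Finset.Icc 1 n, |(1 / (k : ℝ)) * η k ω| :=
          Finset.abs_sum_le_sum_abs _ _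
    _ ≤ ∑ k ∈ Finset.Icc 1 n, (1 / (k : ℝ)) := by
          apply Finset.sum_le_sum
          intro k _
          rw [abs_mul, abs_of_nonneg (by positivity : (0:ℝ) ≤ 1 / (k:ℝ))]
          calc (1/(k:ℝ)) * |η k ω| ≤ (1/(k:ℝ)) * 1 :=
                mul_le_mul_of_nonneg_left (hbdd k ω) (by positivity)
          _ = 1/(k:ℝ) := mul_one _
  have hSL2 : ∀ n, MemLp (S n) 2 ℙ := fun n =>
    MemLp.of_bound (hmeasS n).aestronglyMeasurable (H n)
      (ae_of_all _ fun ω => by rw [Real.norm_eq_abs]; exact hSbd n ω)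
  have hηint : ∀ k, Integrable (η k) ℙ := by
    intro k
    have h := memLp_of_bounded (μ := ℙ) (a := (-1:ℝ)) (b := 1)
      (ae_of_all _ fun ω => Set.mem_Icc.mpr (abs_le.mp (hbdd k ω)))
      (hmeas k).aestronglyMeasurable 1
    exact memLp_one_iff_integrable.mp h
  have hES : ∀ n : ℕ, ∫ ω, S n ω = p * H n := by
    intro n
    show (∫ ω, ∑ k ∈ Finset.Icc 1 n, (1 / (k : ℝ)) * η k ω) = p * H n
    rw [integral_finset_sum _ (fun k _ => ((hηint k).const_mul _))]
    rw [hHdef, Finset.mul_sum]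
    apply Finset.sum_congr rfl
    intro k hk
    rw [integral_const_mul, hmean k (Finset.mem_Icc.mp hk).1]
    ring
  -- Chebyshev + Borel-Cantelli
  set A : ℕ → ℕ → Set Ω := fun m j =>
    {ω | (1 / ((m:ℝ) + 1)) * Real.log (M j) ≤ |S (M j) ω - p * H (M j)|} with hAdef
  have hBC : ∀ m : ℕ, (∑' j, ℙ (A m j)) ≠ ⊤ := by
    intro m
    have hmpos : (0:ℝ) < 1 / ((m:ℝ) + 1) := by positivity
    have key : ∀ j, ℙ (A m j) ≤
        ENNReal.ofReal ((c * ((m:ℝ)+1)^2) * ((j:ℝ) + 1) ^ (-(1 + ε/2))) := by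
      intro j
      have hlog := hMlogpos j
      have hcpos : (0:ℝ) < (1 / ((m:ℝ) + 1)) * Real.log (M j) := mul_pos hmpos hlog
      have hcheb := meas_ge_le_variance_div_sq (μ := ℙ) (hSL2 (M j)) hcpos
      rw [hES (M j)] at hcheb
      refine le_trans hcheb (ENNReal.ofReal_le_ofReal ?_)
      have hvar' := hvar (M j) (hM3 j)
      have hloglog : ((j:ℝ) + 1) ^ γ ≤ Real.log (Real.log (M j)) := by
        calc ((j:ℝ)+1)^γ = Real.log (Real.exp (((j:ℝ)+1)^γ)) := (Real.log_exp _).symm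
        _ ≤ _ := Real.log_le_log (Real.exp_pos _) (hMlog_ge j)
      have hjpos : (0:ℝ) < ((j:ℝ) + 1) ^ γ := Real.rpow_pos_of_pos (by positivity) _
      have hrp : (Real.log (Real.log (M j))) ^ (-(1+ε)) ≤ (((j:ℝ)+1)^γ) ^ (-(1+ε)) :=
        Real.rpow_le_rpow_of_nonpos hjpos hloglog (by linarith)
      have hrp2 : ((((j:ℝ)+1))^γ) ^ (-(1+ε)) = ((j:ℝ)+1) ^ (-(1 + ε/2)) := by
        rw [← Real.rpow_mul (by positivity : (0:ℝ) ≤ (j:ℝ)+1), hγε]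
      have hvb : variance (S (M j)) ℙ ≤
          c * (Real.log (M j))^2 * ((j:ℝ)+1) ^ (-(1 + ε/2)) := by
        refine hvar'.trans ?_
        rw [← hrp2]
        apply mul_le_mul_of_nonneg_left hrp (by positivity)
      rw [div_le_iff₀ (by positivity)]
      have heq : (c * ((m:ℝ)+1)^2) * ((j:ℝ)+1) ^ (-(1 + ε/2)) *
          ((1 / ((m:ℝ) + 1)) * Real.log (M j))^2
          = c * (Real.log (M j))^2 * ((j:ℝ)+1) ^ (-(1 + ε/2)) := by
        have hm0 : ((m:ℝ) + 1) ≠ 0 := by positivity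
        field_simp
      rw [heq]
      exact hvb
    have hsm : Summable (fun j : ℕ => (c * ((m:ℝ)+1)^2) * ((j:ℝ) + 1) ^ (-(1 + ε/2))) := by
      apply Summable.mul_left
      have h1 : Summable (fun n : ℕ => (n:ℝ) ^ (-(1 + ε/2))) :=
        Real.summable_nat_rpow.mpr (by linarith)
      have h2 := h1.comp_injective Nat.succ_injective
      refine h2.congr fun j => ?_
      simp only [Function.comp_apply, Nat.succ_eq_add_one]
      push_cast
      ring_nf
    refine ne_top_of_le_ne_top ?_ (ENNReal.tsum_le_tsum key)
    rw [← ENNReal.ofReal_tsum_of_nonneg (fun j => by positivity) hsm]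
    exact ENNReal.ofReal_ne_top
  have hae : ∀ᵐ ω, ∀ m : ℕ, ∀ᶠ j in atTop, ω ∉ A m j := by
    rw [ae_all_iff]
    exact fun m => ae_eventually_notMem (hBC m)
  -- deterministic gap bound
  have hEtop : Tendsto (fun j : ℕ => Real.exp (((j:ℝ) + 1) ^ γ)) atTop atTop := by
    apply Real.tendsto_exp_atTop.comp
    apply (tendsto_rpow_atTop hγ0).comp
    exact tendsto_atTop_add_const_right _ 1 tendsto_natCast_atTop_atTop
  have hdto : Tendsto (fun j : ℕ => Real.exp (((j:ℝ) + 1) ^ (γ - 1))) atTop (𝓝 1) := by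
    have h0 : Tendsto (fun j : ℕ => ((j:ℝ) + 1) ^ (γ - 1)) atTop (𝓝 0) := by
      have h1 := (tendsto_rpow_neg_atTop (by linarith : (0:ℝ) < 1 - γ)).comp
        (tendsto_atTop_add_const_right atTop 1 (tendsto_natCast_atTop_atTop (R := ℝ)))
      have : -(1 - γ) = γ - 1 := by ring
      simpa [Function.comp_def, this] using h1
    have h2 := (Real.continuous_exp.tendsto 0).comp h0
    simpa [Function.comp_def] using h2
  have hgapd : ∀ δ : ℝ, 0 < δ → ∀ᶠ j in atTop,
      2 * (H (M (j+1)) - H (M j)) ≤ δ * Real.log (M j) := by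
    intro δ hδ
    have h1 : ∀ᶠ j : ℕ in atTop, 8/δ ≤ Real.exp (((j:ℝ) + 1) ^ γ) :=
      hEtop.eventually_ge_atTop _
    have h2 : ∀ᶠ j : ℕ in atTop, Real.exp (((j:ℝ) + 1) ^ (γ - 1)) ≤ 1 + δ/4 :=
      hdto.eventually (eventually_le_nhds (by linarith))
    filter_upwards [h1, h2] with j h1 h2
    set E := Real.exp (((j:ℝ) + 1) ^ γ) with hE
    have hEpos : 0 < E := Real.exp_pos _
    have hgap1 : H (M (j+1)) ≤ 2 + Real.exp ((((j:ℝ) + 1) + 1) ^ γ) := by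
      have ha := hHub (M (j+1))
      have hb := hMlog_le (j+1)
      push_cast at hb
      linarith
    have hgap2 : E ≤ H (M j) := le_trans (hMlog_ge j) (hHlog (M j))
    have hsucc : Real.exp ((((j:ℝ) + 1) + 1) ^ γ) ≤ E * Real.exp (((j:ℝ) + 1) ^ (γ - 1)) := by
      rw [hE, ← Real.exp_add]
      apply Real.exp_le_exp.mpr
      exact aux19_rpow_succ (by linarith [Nat.cast_nonneg (α := ℝ) j] : 1 ≤ (j:ℝ)+1) hγ0.le hγ1.le
    have h8 : 8 ≤ δ * E := by
      rw [div_le_iff₀ hδ] at h1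
      linarith [mul_comm (8/δ) δ]
    have hmul : E * Real.exp (((j:ℝ) + 1) ^ (γ - 1)) ≤ E * (1 + δ/4) :=
      mul_le_mul_of_nonneg_left h2 hEpos.le
    have hfin : 2 * (H (M (j+1)) - H (M j)) ≤ δ * E := by
      nlinarith
    refine hfin.trans ?_
    exact mul_le_mul_of_nonneg_left (hMlog_ge j) hδ.le
  -- H n / log n → 1
  have hHdiv : Tendsto (fun n : ℕ => H n / Real.log n) atTop (𝓝 1) := by
    have hlogtop : Tendsto (fun n : ℕ => Real.log n) atTop atTop :=
      Real.tendsto_log_atTop.comp tendsto_natCast_atTop_atTop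
    have hlim : Tendsto (fun n : ℕ => 1/Real.log n + 1) atTop (𝓝 1) := by
      have h0 := hlogtop.inv_tendsto_atTop
      have := h0.add (tendsto_const_nhds (x := (1:ℝ)) (f := atTop))
      simpa [one_div] using this
    apply tendsto_of_tendsto_of_tendsto_of_le_of_le'
      (tendsto_const_nhds (x := (1:ℝ))) hlim
    · filter_upwards [eventually_ge_atTop 3] with n hn
      have hl := aux19_one_le_log hn
      rw [le_div_iff₀ (by linarith)]
      linarith [hHlog n]
    · filter_upwards [eventually_ge_atTop 3] with n hn
      have hl := aux19_one_le_log hn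
      rw [div_le_iff₀ (by linarith)]
      have h2 : (1/Real.log n + 1) * Real.log n = 1 + Real.log n := by
        field_simp
      rw [h2]
      exact hHub n
  -- |p| bound
  have hp2 : ∀ k : ℕ, 1 ≤ k → ∀ ω, |η k ω - p| ≤ 2 := by
    have hp1 : |p| ≤ 1 := by
      rw [← hmean 1 le_rfl]
      have := norm_integral_le_of_norm_le_const (μ := ℙ) (f := η 1) (C := 1)
        (ae_of_all _ fun ω => by rw [Real.norm_eq_abs]; exact hbdd 1 ω)
      simpa [Real.norm_eq_abs] using this
    intro k hk ω
    calc |η k ω - p| ≤ |η k ω| + |p| := abs_sub _ _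
    _ ≤ 1 + 1 := add_le_add (hbdd k ω) hp1
    _ = 2 := by norm_num
  -- main a.s. argument
  filter_upwards [hae] with ω hω
  set t : ℕ → ℝ := fun n => S n ω - p * H n with htdef
  have hsplit : ∀ (f : ℕ → ℝ) (m n : ℕ), m ≤ n →
      ∑ k ∈ Finset.Icc 1 n, f k - ∑ k ∈ Finset.Icc 1 m, f k
        = ∑ k ∈ Finset.Ioc m n, f k := by
    intro f m n hmn
    have h := Finset.sum_Ioc_consecutive f (Nat.zero_le m) hmn
    rw [← Finset.Icc_add_one_left_eq_Ioc 0 m, ← Finset.Icc_add_one_left_eq_Ioc 0 n, zero_add] at h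
    linarith
  have hincr : ∀ m n : ℕ, m ≤ n → |t n - t m| ≤ 2 * (H n - H m) := by
    intro m n hmn
    have ht : t n - t m = ∑ k ∈ Finset.Ioc m n, (1/(k:ℝ)) * (η k ω - p) := by
      have h1 := hsplit (fun k => (1/(k:ℝ)) * η k ω) m n hmn
      have h2 := hsplit (fun k => (1/(k:ℝ))) m n hmn
      have : t n - t m = (S n ω - S m ω) - p * (H n - H m) := by rw [htdef]; ring
      rw [this, hSdef, hHdef]
      simp only []
      rw [h1, h2, Finset.mul_sum, ← Finset.sum_sub_distrib]
      apply Finset.sum_congr rfl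
      intro k _
      ring
    rw [ht]
    have h2HH : 2 * (H n - H m) = ∑ k ∈ Finset.Ioc m n, 2 * (1/(k:ℝ)) := by
      rw [← Finset.mul_sum, ← hsplit (fun k => (1/(k:ℝ))) m n hmn]
    rw [h2HH]
    calc |∑ k ∈ Finset.Ioc m n, (1/(k:ℝ)) * (η k ω - p)|
        ≤ ∑ k ∈ Finset.Ioc m n, |(1/(k:ℝ)) * (η k ω - p)| := Finset.abs_sum_le_sum_abs _ _
    _ ≤ ∑ k ∈ Finset.Ioc m n, 2 * (1/(k:ℝ)) := by
        apply Finset.sum_le_sum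
        intro k hk
        obtain ⟨hk1, _⟩ := Finset.mem_Ioc.mp hk
        rw [abs_mul, abs_of_nonneg (by positivity : (0:ℝ) ≤ 1/(k:ℝ))]
        calc (1/(k:ℝ)) * |η k ω - p| ≤ (1/(k:ℝ)) * 2 :=
              mul_le_mul_of_nonneg_left (hp2 k (by omega) ω) (by positivity)
        _ = 2 * (1/(k:ℝ)) := by ring
  have hsub : ∀ δ : ℝ, 0 < δ → ∀ᶠ j in atTop, |t (M j)| ≤ δ * Real.log (M j) := by
    intro δ hδ
    obtain ⟨m, hm⟩ := exists_nat_one_div_lt hδ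
    filter_upwards [hω m] with j hj
    have hj' : |S (M j) ω - p * H (M j)| < (1 / ((m:ℝ) + 1)) * Real.log (M j) := by
      by_contra hcon
      exact hj (not_lt.mp hcon)
    calc |t (M j)| = |S (M j) ω - p * H (M j)| := rfl
    _ ≤ (1 / ((m:ℝ) + 1)) * Real.log (M j) := hj'.le
    _ ≤ δ * Real.log (M j) := mul_le_mul_of_nonneg_right hm.le (hMlogpos j).le
  have htend := aux19_pathwise t H M hHmono hM1 hMmono hMtop hincr hsub hgapd
  -- assemble
  have heq : (fun n : ℕ => (1 / Real.log n) * ∑ k ∈ Finset.Icc 1 n, (1/(k:ℝ)) * η k ω)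
      = fun n : ℕ => t n / Real.log n + p * (H n / Real.log n) := by
    funext n
    calc (1 / Real.log n) * ∑ k ∈ Finset.Icc 1 n, (1/(k:ℝ)) * η k ω
        = S n ω / Real.log n := one_div_mul_eq_div _ _
    _ = (t n + p * H n) / Real.log n := by
        congr 1
        rw [htdef]
        ring
    _ = t n / Real.log n + p * (H n / Real.log n) := by
        rw [← mul_div_assoc, add_div]
  rw [heq]
  have hfin := htend.add (hHdiv.const_mul p)
  simpa using hfin
end
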